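/- For all positive integers n, m, r with n ≥ m and every real (or polynomial variable) y, C(m+r,m) · ∑_{k=m}^{n} C(n+r,k+r)·B_{n−k}^{(r)}·w̃_{k+r,m+r}(y) = C(n+r,r)·y^r·w̃_{n,m}(y) (an identity of rational-coefficient polynomials in y). In particular, for r = 1: m · ∑_{k=m}^{n} C(n,k)·B_{n−k}·w̃_{k,m}(y) = n·y·w̃_{n−1,m−1}(y), where B_j are the classical Bernoulli numbers (with B_1 = −1/2). -/

import Mathlib

/-- Stirling numbers of the second kind. -/
def stirling2 : ℕ → ℕ → ℕ
  | 0, 0 => 1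
  | 0, _ + 1 => 0
  | _ + 1, 0 => 0
  | n + 1, k + 1 => (k + 1) * stirling2 n (k + 1) + stirling2 n k

/-- Derangement numbers `d_n = n! ∑_{i=0}^n (-1)^i / i!`. -/
noncomputable def derang (n : ℕ) : ℝ :=
  (n.factorial : ℝ) * ∑ i ∈ Finset.range (n + 1), (-1 : ℝ) ^ i / (i.factorial : ℝ)

/-- Partial derangement numbers `d_{n,r}`. -/
noncomputable def pderang (n r : ℕ) : ℝ :=
  if r ≤ n then (n.choose r : ℝ) * derang (n - r) else 0

/-- Partial deranged Bell polynomials `w̃_{n,r}(y)`. -/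
noncomputable def pdbPoly (n r : ℕ) (y : ℝ) : ℝ :=
  ∑ k ∈ Finset.range (n + 1), (stirling2 n k : ℝ) * pderang k r * y ^ k

/-- Higher-order Bernoulli numbers `B_n^{(r)}`, with `bernoulli 1 = -1/2`. -/
def bernHigher : ℕ → ℕ → ℚ
  | 0, n => if n = 0 then 1 else 0
  | r + 1, n =>
      ∑ k ∈ Finset.range (n + 1), (n.choose k : ℚ) * bernoulli k * bernHigher r (n - k)

lemma stirling2_eq_zero : ∀ n k, n < k → stirling2 n k = 0
  | 0, _+1, _ => rfl
  | n+1, k+1, h => by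
      have h1 := stirling2_eq_zero n (k+1) (by omega)
      have h2 := stirling2_eq_zero n k (by omega)
      simp [stirling2, h1, h2]
lemma stirling2_zero (k : ℕ) : stirling2 0 k = if k = 0 then 1 else 0 := by
  cases k <;> rfl
lemma stirling2_succ (n k : ℕ) : stirling2 (n+1) (k+1) = (k+1) * stirling2 n (k+1) + stirling2 n k := rfl
lemma stirling2_zero_right (n : ℕ) : stirling2 (n+1) 0 = 0 := rfl
lemma stirling2_one : ∀ M, stirling2 (M+1) 1 = 1
  | 0 => rfl
  | M+1 => by rw [stirling2_succ, stirling2_one M, stirling2_zero_right]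
lemma L1 : ∀ (N k : ℕ), ∑ j ∈ Finset.range (N+1), N.choose j * stirling2 j k = stirling2 (N+1) (k+1)
  | 0, k => by simp [stirling2]
  | N+1, 0 => by
      rw [Finset.sum_eq_single 0]
      · rw [stirling2_one (N+1)]; rfl
      · intro j _ hj
        match j, hj with
        | j+1, _ => simp [stirling2_zero_right]
      · simp
  | N+1, k+1 => by
      have IH1 := L1 N (k+1)
      have IH2 := L1 N k
      have peel : ∑ i ∈ Finset.range (N+1), N.choose (i+1) * stirling2 (i+1) (k+1)
          = ∑ j ∈ Finset.range (N+1), N.choose j * stirling2 j (k+1) := by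
        have h1 := Finset.sum_range_succ' (fun j => N.choose j * stirling2 j (k+1)) (N+1)
        have h2 := Finset.sum_range_succ (fun j => N.choose j * stirling2 j (k+1)) (N+1)
        simp only [stirling2_eq_zero 0 (k+1) (Nat.succ_pos k), Nat.mul_zero, Nat.add_zero,
          Nat.choose_succ_self, Nat.zero_mul] at h1 h2
        rw [← h1, h2]
      rw [Finset.sum_range_succ' _ (N+1)]
      have term : ∀ i, (N+1).choose (i+1) * stirling2 (i+1) (k+1)
          = ((k+1) * (N.choose i * stirling2 i (k+1)) + N.choose i * stirling2 i k)
            + N.choose (i+1) * stirling2 (i+1) (k+1) := by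
        intro i
        rw [Nat.choose_succ_succ, stirling2_succ]
        ring
      rw [Finset.sum_congr rfl (fun i _ => term i), Finset.sum_add_distrib,
        Finset.sum_add_distrib, ← Finset.mul_sum, peel, IH1, IH2,
        stirling2_succ (N+1) (k+1), stirling2_eq_zero 0 (k+1) (by omega)]
      ring
open PowerSeries in
noncomputable def St (k : ℕ) : PowerSeries ℚ :=
  PowerSeries.mk fun n => (stirling2 n k : ℚ) / n.factorial
lemma coeff_St (n k : ℕ) :
    PowerSeries.coeff n (St k) = (stirling2 n k : ℚ) / n.factorial :=
  PowerSeries.coeff_mk _ _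
lemma coeff_exp_sub_one (n : ℕ) :
    PowerSeries.coeff n (PowerSeries.exp ℚ - 1) =
      if n = 0 then 0 else 1 / (n.factorial : ℚ) := by
  rcases n with _ | n
  · simp
  · rw [map_sub, PowerSeries.coeff_exp]
    simp [PowerSeries.coeff_one, Algebra.algebraMap_self, RingHom.id_apply, one_div]
lemma egf_stirling2 : ∀ k : ℕ,
    (PowerSeries.exp ℚ - 1) ^ k = PowerSeries.C (k.factorial : ℚ) * St k
  | 0 => by
      ext n
      simp only [pow_zero, Nat.factorial_zero, Nat.cast_one, map_one, one_mul, coeff_St]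
      rcases n with _ | n
      · simp [stirling2]
      · simp [stirling2_zero_right, PowerSeries.coeff_one]
  | k+1 => by
      rw [pow_succ, egf_stirling2 k]
      ext N
      rw [mul_assoc, PowerSeries.coeff_C_mul, PowerSeries.coeff_C_mul, PowerSeries.coeff_mul,
        Finset.Nat.sum_antidiagonal_eq_sum_range_succ_mk]
      simp only [coeff_St, coeff_exp_sub_one]
      rcases N with _ | M
      · simp [stirling2_eq_zero 0 (k+1) k.succ_pos]
      · rw [Finset.sum_range_succ]
        simp only [Nat.sub_self, if_pos rfl, mul_zero, add_zero]
        have congr1 : ∑ a ∈ Finset.range (M+1),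
              (stirling2 a k : ℚ)/a.factorial * (if M+1-a = 0 then 0 else 1/((M+1-a).factorial : ℚ))
            = ∑ a ∈ Finset.range (M+1), ((M+1).choose a : ℚ) * stirling2 a k / (M+1).factorial := by
          apply Finset.sum_congr rfl
          intro a ha
          have haM : a < M+1 := Finset.mem_range.mp ha
          rw [if_neg (by omega), Nat.cast_choose ℚ (show a ≤ M+1 by omega)]
          have h1 : ((a.factorial : ℚ)) ≠ 0 := Nat.cast_ne_zero.mpr a.factorial_ne_zero
          have h2 : (((M+1-a).factorial : ℚ)) ≠ 0 := Nat.cast_ne_zero.mpr (M+1-a).factorial_ne_zero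
          have h3 : (((M+1).factorial : ℚ)) ≠ 0 := Nat.cast_ne_zero.mpr (M+1).factorial_ne_zero
          field_simp
        have H : ∑ a ∈ Finset.range (M+1), (M+1).choose a * stirling2 a k
            = (k+1) * stirling2 (M+1) (k+1) := by
          have h := L1 (M+1) k
          rw [Finset.sum_range_succ, stirling2_succ] at h
          simp only [Nat.choose_self, one_mul] at h
          omega
        have HQ : ∑ a ∈ Finset.range (M+1), ((M+1).choose a : ℚ) * stirling2 a k
            = ((k+1) * stirling2 (M+1) (k+1) : ℕ) := by exact_mod_cast congrArg (Nat.cast (R := ℚ)) H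
        rw [congr1, ← Finset.sum_div, HQ, Nat.factorial_succ]
        have h3 : (((M+1).factorial : ℚ)) ≠ 0 := Nat.cast_ne_zero.mpr (M+1).factorial_ne_zero
        push_cast [Nat.factorial_succ]
        field_simp
        ring
lemma coeff_bern (n : ℕ) :
    PowerSeries.coeff n (bernoulliPowerSeries ℚ) = bernoulli n / n.factorial := by
  rw [bernoulliPowerSeries, PowerSeries.coeff_mk]
  simp [Algebra.algebraMap_self]
lemma coeff_bernPow : ∀ (r n : ℕ),
    PowerSeries.coeff n ((bernoulliPowerSeries ℚ) ^ r) = bernHigher r n / n.factorial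
  | 0, n => by
      rcases n with _ | n
      · simp [bernHigher]
      · simp [bernHigher, PowerSeries.coeff_one]
  | r+1, n => by
      rw [pow_succ', PowerSeries.coeff_mul, Finset.Nat.sum_antidiagonal_eq_sum_range_succ_mk]
      have step : ∀ a ∈ Finset.range (n+1),
          PowerSeries.coeff a (bernoulliPowerSeries ℚ) *
            PowerSeries.coeff (n-a) ((bernoulliPowerSeries ℚ)^r)
          = (n.choose a : ℚ) * bernoulli a * bernHigher r (n-a) / n.factorial := by
        intro a ha
        have haN : a ≤ n := by have := Finset.mem_range.mp ha; omega
        rw [coeff_bern, coeff_bernPow r (n-a), Nat.cast_choose ℚ haN]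
        have h1 : ((a.factorial : ℚ)) ≠ 0 := Nat.cast_ne_zero.mpr a.factorial_ne_zero
        have h2 : (((n-a).factorial : ℚ)) ≠ 0 := Nat.cast_ne_zero.mpr (n-a).factorial_ne_zero
        have h3 : ((n.factorial : ℚ)) ≠ 0 := Nat.cast_ne_zero.mpr n.factorial_ne_zero
        field_simp
      rw [Finset.sum_congr rfl step, ← Finset.sum_div]
      rfl
lemma keyQ (n k r : ℕ) :
    ∑ l ∈ Finset.range (n+r+1),
        ((n+r).choose l : ℚ) * bernHigher r (n+r-l) * stirling2 l (k+r)
    = ((n+r).factorial * k.factorial : ℚ) / (n.factorial * (k+r).factorial) * stirling2 n k := by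
  have hB : (bernoulliPowerSeries ℚ) ^ r * (PowerSeries.exp ℚ - 1) ^ (k+r)
      = (PowerSeries.X) ^ r * (PowerSeries.exp ℚ - 1) ^ k := by
    rw [← bernoulliPowerSeries_mul_exp_sub_one ℚ, mul_pow, pow_add]; ring
  rw [egf_stirling2 (k+r), egf_stirling2 k] at hB
  have h2 := congrArg (PowerSeries.coeff (n+r)) hB
  rw [mul_left_comm, PowerSeries.coeff_C_mul, PowerSeries.coeff_mul,
    Finset.Nat.sum_antidiagonal_eq_sum_range_succ_mk, Finset.mul_sum,
    PowerSeries.coeff_X_pow_mul, PowerSeries.coeff_C_mul, coeff_St] at h2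
  simp only [coeff_bernPow, coeff_St] at h2
  -- h2 : ∑ a ∈ range (n+r+1), (k+r)! * (bernHigher r a / a! * (S (n+r-a) (k+r) / (n+r-a)!))
  --      = k! * (S n k / n!)
  have h4 := Finset.sum_range_reflect
    (fun a => ((k+r).factorial : ℚ) * (bernHigher r a / a.factorial *
      ((stirling2 (n+r-a) (k+r) : ℚ) / (n+r-a).factorial))) (n+r+1)
  simp only [Nat.add_sub_cancel] at h4
  rw [← h4] at h2
  have h5 : ∀ l ∈ Finset.range (n+r+1),
      ((k+r).factorial : ℚ) * (bernHigher r (n+r-l) / (n+r-l).factorial *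
        ((stirling2 (n+r-(n+r-l)) (k+r) : ℚ) / (n+r-(n+r-l)).factorial))
      = ((k+r).factorial : ℚ) * (bernHigher r (n+r-l) / (n+r-l).factorial *
        ((stirling2 l (k+r) : ℚ) / l.factorial)) := by
    intro l hl
    have : n+r-(n+r-l) = l := Nat.sub_sub_self (by have := Finset.mem_range.mp hl; omega)
    rw [this]
  rw [Finset.sum_congr rfl h5] at h2
  -- now turn the goal into (n+r)!/(k+r)! times h2
  have key : ∀ l ∈ Finset.range (n+r+1),
      ((n+r).choose l : ℚ) * bernHigher r (n+r-l) * stirling2 l (k+r)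
      = ((n+r).factorial / (k+r).factorial : ℚ) *
          (((k+r).factorial : ℚ) * (bernHigher r (n+r-l) / (n+r-l).factorial *
            ((stirling2 l (k+r) : ℚ) / l.factorial))) := by
    intro l hl
    have hlN : l ≤ n+r := by have := Finset.mem_range.mp hl; omega
    rw [Nat.cast_choose ℚ hlN]
    have h1 : ((l.factorial : ℚ)) ≠ 0 := Nat.cast_ne_zero.mpr l.factorial_ne_zero
    have h2' : (((n+r-l).factorial : ℚ)) ≠ 0 := Nat.cast_ne_zero.mpr (n+r-l).factorial_ne_zero
    have h3 : (((k+r).factorial : ℚ)) ≠ 0 := Nat.cast_ne_zero.mpr (k+r).factorial_ne_zero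
    field_simp
  rw [Finset.sum_congr rfl key, ← Finset.mul_sum, h2]
  have h1 : ((n.factorial : ℚ)) ≠ 0 := Nat.cast_ne_zero.mpr n.factorial_ne_zero
  have h3 : (((k+r).factorial : ℚ)) ≠ 0 := Nat.cast_ne_zero.mpr (k+r).factorial_ne_zero
  field_simp
lemma keyR (n k r : ℕ) :
    ∑ l ∈ Finset.range (n+r+1),
        ((n+r).choose l : ℝ) * ((bernHigher r (n+r-l) : ℚ) : ℝ) * stirling2 l (k+r)
    = ((n+r).factorial * k.factorial : ℝ) / (n.factorial * (k+r).factorial) * stirling2 n k := by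
  have h := congrArg (fun q : ℚ => (q : ℝ)) (keyQ n k r)
  push_cast at h
  convert h using 2
lemma main (n m r : ℕ) (hmn : m ≤ n) (y : ℝ) :
    ((m+r).choose m : ℝ) * ∑ k ∈ Finset.Icc m n,
        ((n+r).choose (k+r) : ℝ) * ((bernHigher r (n-k) : ℚ) : ℝ) * pdbPoly (k+r) (m+r) y
    = ((n+r).choose r : ℝ) * y^r * pdbPoly n m y := by
  have fact_ne : ∀ a : ℕ, ((a.factorial : ℝ)) ≠ 0 :=
    fun a => Nat.cast_ne_zero.mpr a.factorial_ne_zero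
  -- Step 1: expand pdbPoly over common range
  have step1 : ∀ k ∈ Finset.Icc m n, pdbPoly (k+r) (m+r) y
      = ∑ K ∈ Finset.range (n+r+1), (stirling2 (k+r) K : ℝ) * pderang K (m+r) * y^K := by
    intro k hk
    obtain ⟨hk1, hk2⟩ := Finset.mem_Icc.mp hk
    refine Finset.sum_subset (Finset.range_subset_range.mpr (by omega)) ?_
    intro K hK1 hK2
    have h1 : k+r < K := by
      simp only [Finset.mem_range] at hK2; omega
    rw [stirling2_eq_zero (k+r) K h1]
    simp
  -- inner sum identity
  have inner : ∀ j ∈ Finset.Icc m n,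
      ∑ k ∈ Finset.Icc m n,
          ((n+r).choose (k+r) : ℝ) * ((bernHigher r (n-k) : ℚ) : ℝ) * stirling2 (k+r) (j+r)
      = ((n+r).factorial * j.factorial : ℝ) / (n.factorial * (j+r).factorial) * stirling2 n j := by
    intro j hj
    obtain ⟨hj1, hj2⟩ := Finset.mem_Icc.mp hj
    rw [← keyR n j r]
    have sub1 : Finset.Icc (m+r) (n+r) ⊆ Finset.range (n+r+1) := by
      intro l hl
      simp only [Finset.mem_Icc] at hl
      simp only [Finset.mem_range]; omega
    rw [← Finset.sum_subset sub1 (by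
      intro l hl1 hl2
      simp only [Finset.mem_range] at hl1
      simp only [Finset.mem_Icc] at hl2
      have : l < m+r := by omega
      rw [stirling2_eq_zero l (j+r) (by omega)]
      simp)]
    rw [← Finset.map_add_right_Icc m n r, Finset.sum_map]
    apply Finset.sum_congr rfl
    intro k hk
    simp only [addRightEmbedding_apply, Nat.add_sub_add_right]
  -- LHS transformation
  rw [Finset.sum_congr rfl (fun k hk => by rw [step1 k hk])]
  have lhs2 : ∑ k ∈ Finset.Icc m n, ((n+r).choose (k+r) : ℝ) * ((bernHigher r (n-k) : ℚ) : ℝ) *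
        ∑ K ∈ Finset.range (n+r+1), (stirling2 (k+r) K : ℝ) * pderang K (m+r) * y^K
      = ∑ K ∈ Finset.range (n+r+1), (∑ k ∈ Finset.Icc m n,
          ((n+r).choose (k+r) : ℝ) * ((bernHigher r (n-k) : ℚ) : ℝ) * stirling2 (k+r) K)
            * (pderang K (m+r) * y^K) := by
    calc ∑ k ∈ Finset.Icc m n, ((n+r).choose (k+r) : ℝ) * ((bernHigher r (n-k) : ℚ) : ℝ) *
            ∑ K ∈ Finset.range (n+r+1), (stirling2 (k+r) K : ℝ) * pderang K (m+r) * y^K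
        = ∑ k ∈ Finset.Icc m n, ∑ K ∈ Finset.range (n+r+1),
            ((n+r).choose (k+r) : ℝ) * ((bernHigher r (n-k) : ℚ) : ℝ) *
              ((stirling2 (k+r) K : ℝ) * pderang K (m+r) * y^K) := by
          exact Finset.sum_congr rfl fun k _ => Finset.mul_sum _ _ _
      _ = ∑ K ∈ Finset.range (n+r+1), ∑ k ∈ Finset.Icc m n,
            ((n+r).choose (k+r) : ℝ) * ((bernHigher r (n-k) : ℚ) : ℝ) *
              ((stirling2 (k+r) K : ℝ) * pderang K (m+r) * y^K) := Finset.sum_comm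
      _ = _ := by
          refine Finset.sum_congr rfl fun K _ => ?_
          rw [Finset.sum_mul]
          refine Finset.sum_congr rfl fun k _ => ?_
          ring
  rw [lhs2]
  have sub2 : Finset.Icc (m+r) (n+r) ⊆ Finset.range (n+r+1) := by
    intro l hl
    simp only [Finset.mem_Icc] at hl
    simp only [Finset.mem_range]; omega
  rw [← Finset.sum_subset sub2 (by
    intro K hK1 hK2
    simp only [Finset.mem_range] at hK1
    simp only [Finset.mem_Icc] at hK2
    have hp : pderang K (m+r) = 0 := if_neg (by omega)
    rw [hp]
    ring)]
  rw [← Finset.map_add_right_Icc m n r, Finset.sum_map]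
  rw [Finset.sum_congr rfl (fun j hj => by
    simp only [addRightEmbedding_apply]
    rw [inner j hj])]
  -- RHS transformation
  have rhs1 : pdbPoly n m y
      = ∑ j ∈ Finset.Icc m n, (stirling2 n j : ℝ) * pderang j m * y^j := by
    refine (Finset.sum_subset (fun j hj => by
        simp only [Finset.mem_Icc] at hj
        simp only [Finset.mem_range]; omega) ?_).symm
    intro j hj1 hj2
    simp only [Finset.mem_range] at hj1
    simp only [Finset.mem_Icc] at hj2
    have hp : pderang j m = 0 := if_neg (by omega)
    rw [hp]
    ring
  rw [rhs1, Finset.mul_sum, Finset.mul_sum]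
  refine Finset.sum_congr rfl fun j hj => ?_
  obtain ⟨hj1, hj2⟩ := Finset.mem_Icc.mp hj
  rw [pderang, if_pos (show m+r ≤ j+r by omega), pderang, if_pos (show m ≤ j from hj1)]
  have e1 : j+r-(m+r) = j-m := by omega
  rw [e1]
  rw [Nat.cast_choose ℝ (show m ≤ m+r by omega), Nat.cast_choose ℝ (show m+r ≤ j+r by omega),
    Nat.cast_choose ℝ (show r ≤ n+r by omega), Nat.cast_choose ℝ (show m ≤ j from hj1)]
  rw [show m+r-m = r by omega, show j+r-(m+r) = j-m by omega, show n+r-r = n by omega]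
  field_simp
  ring
lemma bernHigher_one (j : ℕ) : bernHigher 1 j = bernoulli j := by
  show (∑ k ∈ Finset.range (j + 1), (j.choose k : ℚ) * bernoulli k * bernHigher 0 (j - k)) = _
  rw [Finset.sum_eq_single j]
  · simp [bernHigher]
  · intro k hk hkj
    have : k < j + 1 := Finset.mem_range.mp hk
    have : ¬ (j - k = 0) := by omega
    simp [bernHigher, this]
  · simp

/-- For `n ≥ m ≥ 1` and `r ≥ 1`,
`C(m+r,m) ∑_{k=m}^n C(n+r,k+r) B_{n-k}^{(r)} w̃_{k+r,m+r}(y) = C(n+r,r) y^r w̃_{n,m}(y)`;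
in particular for `r = 1`,
`m ∑_{k=m}^n C(n,k) B_{n-k} w̃_{k,m}(y) = n y w̃_{n-1,m-1}(y)`. -/
theorem choose_mul_sum_bernHigher_mul_pdbPoly (n m r : ℕ)
    (hn : 0 < n) (hm : 0 < m) (hr : 0 < r) (hmn : m ≤ n) (y : ℝ) :
    (((m + r).choose m : ℝ) * ∑ k ∈ Finset.Icc m n,
        ((n + r).choose (k + r) : ℝ) * ((bernHigher r (n - k) : ℚ) : ℝ) *
          pdbPoly (k + r) (m + r) y =
      ((n + r).choose r : ℝ) * y ^ r * pdbPoly n m y) ∧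
    ((m : ℝ) * ∑ k ∈ Finset.Icc m n,
        (n.choose k : ℝ) * ((bernoulli (n - k) : ℚ) : ℝ) * pdbPoly k m y =
      (n : ℝ) * y * pdbPoly (n - 1) (m - 1) y) := by
  refine ⟨main n m r hmn y, ?_⟩
  obtain ⟨n', rfl⟩ : ∃ n', n = n' + 1 := ⟨n - 1, by omega⟩
  obtain ⟨m', rfl⟩ : ∃ m', m = m' + 1 := ⟨m - 1, by omega⟩
  simp only [Nat.add_sub_cancel]
  have h := main n' m' 1 (by omega) y
  rw [pow_one] at h
  simp only [bernHigher_one, Nat.choose_succ_self_right, Nat.choose_one_right] at h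
  rw [← Finset.map_add_right_Icc m' n' 1, Finset.sum_map]
  simp only [addRightEmbedding_apply, Nat.add_sub_add_right]
  exact h
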